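/- Let F, U : ℝ → ℝ and b > 0 with |U(t)| < b, and set 𝔉 = √(1 + G·B²/b²), 𝔘 = √(1 - U²/b²) for real numbers G > 0 and B. Then the completed-square identity b²(𝔉 - 1) + V = ½(B√G ± 𝔉U)²𝔉^{-1} + (b²/2)(𝔉𝔘 - 1)²𝔉^{-1} - b² ∓ B√G·U + b²𝔘 + V holds, where V = b²(1 - 𝔘); in particular b²(𝔉-1) + b²(1-𝔘) ≥ ∓ B√G·U, with equality iff B√G ± 𝔉U = 0 (which also forces 𝔉𝔘 = 1). -/
import Mathlib


open Real

set_option maxHeartbeats 1000000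

/-- the completed-square (Bogomolny) identity at the core of the BPS
reduction, for both signs, together with the resulting lower bound
`b²(𝔉-1) + b²(1-𝔘) ≥ ∓ B√G·U`, with equality iff `B√G ± 𝔉U = 0` (which also
forces `𝔉𝔘 = 1`). -/
theorem stmt15 (b G B U : ℝ) (hb : 0 < b) (hG : 0 < G) (hU : |U| < b) :
    let 𝔉 := Real.sqrt (1 + G * B^2 / b^2)
    let 𝔘 := Real.sqrt (1 - U^2 / b^2)
    let V := b^2 * (1 - 𝔘)
    (b^2 * (𝔉 - 1) + V
        = (1/2) * (B * Real.sqrt G + 𝔉 * U)^2 * 𝔉⁻¹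
          + (b^2/2) * (𝔉 * 𝔘 - 1)^2 * 𝔉⁻¹
          - b^2 - B * Real.sqrt G * U + b^2 * 𝔘 + V)
    ∧ (b^2 * (𝔉 - 1) + V
        = (1/2) * (B * Real.sqrt G - 𝔉 * U)^2 * 𝔉⁻¹
          + (b^2/2) * (𝔉 * 𝔘 - 1)^2 * 𝔉⁻¹
          - b^2 + B * Real.sqrt G * U + b^2 * 𝔘 + V)
    ∧ (b^2 * (𝔉 - 1) + b^2 * (1 - 𝔘) ≥ -(B * Real.sqrt G * U)
        ∧ (b^2 * (𝔉 - 1) + b^2 * (1 - 𝔘) = -(B * Real.sqrt G * U)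
            ↔ B * Real.sqrt G + 𝔉 * U = 0))
    ∧ (b^2 * (𝔉 - 1) + b^2 * (1 - 𝔘) ≥ B * Real.sqrt G * U
        ∧ (b^2 * (𝔉 - 1) + b^2 * (1 - 𝔘) = B * Real.sqrt G * U
            ↔ B * Real.sqrt G - 𝔉 * U = 0))
    ∧ (B * Real.sqrt G + 𝔉 * U = 0 → 𝔉 * 𝔘 = 1)
    ∧ (B * Real.sqrt G - 𝔉 * U = 0 → 𝔉 * 𝔘 = 1) := by
  intro f u V
  have hb2 : (0:ℝ) < b^2 := by positivity
  have hU2 : U^2 < b^2 := by nlinarith [abs_nonneg U, sq_abs U, abs_lt.mp hU]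
  have hf2 : f^2 = 1 + G * B^2 / b^2 := Real.sq_sqrt (by positivity)
  have hu2 : u^2 = 1 - U^2 / b^2 := Real.sq_sqrt (by rw [sub_nonneg, div_le_one hb2]; exact hU2.le)
  have hfpos : 0 < f := Real.sqrt_pos.mpr (by positivity)
  have hupos : 0 < u := Real.sqrt_pos.mpr (by rw [sub_pos, div_lt_one hb2]; exact hU2)
  have hg : (Real.sqrt G)^2 = G := Real.sq_sqrt hG.le
  have hfi : 0 < f⁻¹ := inv_pos.mpr hfpos
  have key : ∀ s : ℝ, s^2 = 1 →
      b^2 * (f - 1) + b^2*(1-u) + s * (B * Real.sqrt G * U)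
        = (1/2) * (B * Real.sqrt G + s * (f * U))^2 * f⁻¹
          + (b^2/2) * (f * u - 1)^2 * f⁻¹ := by
    intro s hs
    have hbi : b * b⁻¹ = 1 := mul_inv_cancel₀ hb.ne'
    field_simp
    linear_combination (f^2*U^2+B^2*G)*(b*b⁻¹+1)*hbi +
      b^2*hf2 - b^2*f^2*hu2 - f^2*U^2*hs - B^2*hg
  have force : ∀ s : ℝ, s^2 = 1 → B * Real.sqrt G + s * (f * U) = 0 → f * u = 1 := by
    intro s hs hS
    have h1 : (f*u)^2 = 1 := by
      linear_combination f^2*hu2 + hf2 +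
        -(1/b^2)*(B^2*hg - (B*Real.sqrt G - s*(f*U))*hS - f^2*U^2*hs)
    have h2 : (f*u - 1)*(f*u + 1) = 0 := by linear_combination h1
    rcases mul_eq_zero.mp h2 with h | h
    · linarith
    · nlinarith [mul_pos hfpos hupos]
  have k1 := key 1 (by norm_num)
  have k2 := key (-1) (by norm_num)
  have sqA : ∀ s : ℝ, (0:ℝ) ≤ (1/2) * (B * Real.sqrt G + s * (f * U))^2 * f⁻¹ := by
    intro s; positivity
  have sqB : (0:ℝ) ≤ (b^2/2) * (f * u - 1)^2 * f⁻¹ := by positivity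
  have eqcase : ∀ s : ℝ, s^2 = 1 →
      (b^2 * (f - 1) + b^2 * (1 - u) = -(s * (B * Real.sqrt G * U))
        ↔ B * Real.sqrt G + s * (f * U) = 0) := by
    intro s hs
    constructor
    · intro heq
      have hk := key s hs
      have hz : (1/2) * (B * Real.sqrt G + s * (f * U))^2 * f⁻¹ = 0 := by
        linarith [sqA s, sqB]
      have : (B * Real.sqrt G + s * (f * U))^2 = 0 := by
        have := mul_eq_zero.mp (by linarith : ((B * Real.sqrt G + s * (f * U))^2) * f⁻¹ = 0)
        rcases this with h | h
        · exact h
        · exact absurd h (by positivity)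
      exact pow_eq_zero_iff (by norm_num) |>.mp this
    · intro hS
      have hfu := force s hs hS
      have hk := key s hs
      rw [hS] at hk
      have hT : f * u - 1 = 0 := by rw [hfu]; ring
      rw [hT] at hk
      nlinarith [hk]
  refine ⟨by linear_combination key 1 (by norm_num), by linear_combination key (-1) (by norm_num),
    ⟨?_, ?_⟩, ⟨?_, ?_⟩, ?_, ?_⟩
  · linarith [sqA 1, sqB, k1]
  · have := eqcase 1 (by norm_num)
    constructor
    · intro h; have := this.mp (by linarith); linarith [this]
    · intro h
      have := this.mpr (by linarith)
      linarith [this]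
  · linarith [sqA (-1), sqB, k2]
  · have := eqcase (-1) (by norm_num)
    constructor
    · intro h; have h2 := this.mp (by linarith); linarith [h2]
    · intro h
      have := this.mpr (by linarith)
      linarith [this]
  · intro h; exact force 1 (by norm_num) (by linarith)
  · intro h; exact force (-1) (by norm_num) (by linarith)
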